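/- Let μ, γ > 0 and ν = min{μ, γ}. Suppose y : [0,∞) → [0,∞) satisfies y(t) ≤ e^{-μ(t-σ)} y(σ) + C sup_{σ<τ<t} η(τ) for all 0 ≤ σ < t, where η(t) ≤ C' e^{-γ t}. Then there is a constant C'' such that y(t) ≤ C'' e^{-ν' t} for every ν' < ν; in particular y(t) = O(e^{-ν' t}) as t → ∞ for each ν' < ν. -/
import Mathlib


open Real Set

set_option maxHeartbeats 1000000 in

/-- abstract decay lemma. If `y ≥ 0` satisfies
`y(t) ≤ e^{-μ(t-σ)} y(σ) + C sup_{σ<τ<t} η(τ)` for all `0 ≤ σ < t`, and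
`η(t) ≤ C' e^{-γ t}`, then for every `ν' < ν = min{μ,γ}` there is `C''` with
`y(t) ≤ C'' e^{-ν' t}` for all `t ≥ 0`. -/
theorem stmt14 (μ γ C C' : ℝ) (hμ : 0 < μ) (hγ : 0 < γ) (hC : 0 ≤ C) (hC' : 0 ≤ C')
    (y η : ℝ → ℝ)
    (hy : ∀ t, 0 ≤ t → 0 ≤ y t) (hη : ∀ t, 0 ≤ t → 0 ≤ η t)
    (hineq : ∀ σ t : ℝ, 0 ≤ σ → σ < t →
      y t ≤ Real.exp (-μ * (t - σ)) * y σ + C * sSup (η '' Set.Ioo σ t))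
    (hηdecay : ∀ t, 0 ≤ t → η t ≤ C' * Real.exp (-γ * t)) :
    ∀ ν' : ℝ, ν' < min μ γ →
      ∃ C'' : ℝ, ∀ t, 0 ≤ t → y t ≤ C'' * Real.exp (-ν' * t) := by
  intro ν' hν'
  have hν'μ : ν' < μ := lt_of_lt_of_le hν' (min_le_left _ _)
  have hν'γ : ν' < γ := lt_of_lt_of_le hν' (min_le_right _ _)
  -- sup bound for η on (σ, t)
  have hsup : ∀ σ t : ℝ, 0 ≤ σ → σ < t →
      sSup (η '' Set.Ioo σ t) ≤ C' * Real.exp (-γ * σ) := by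
    intro σ t hσ hσt
    apply csSup_le ((Set.nonempty_Ioo.2 hσt).image η)
    rintro x ⟨τ, hτ, rfl⟩
    have hτ0 : 0 ≤ τ := le_of_lt (lt_of_le_of_lt hσ hτ.1)
    calc η τ ≤ C' * Real.exp (-γ * τ) := hηdecay τ hτ0
    _ ≤ C' * Real.exp (-γ * σ) := by
        apply mul_le_mul_of_nonneg_left _ hC'
        apply Real.exp_le_exp.2
        nlinarith [hτ.1]
  -- boundedness
  set B : ℝ := y 0 + C * C' with hB
  have hBnn : 0 ≤ B := by
    have := hy 0 le_rfl; positivity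
  have hbound : ∀ t, 0 ≤ t → y t ≤ B := by
    intro t ht
    rcases eq_or_lt_of_le ht with h | h
    · simp [hB, ← h]; positivity
    · have h1 := hineq 0 t le_rfl h
      have h2 : sSup (η '' Set.Ioo 0 t) ≤ C' * Real.exp (-γ * 0) := hsup 0 t le_rfl h
      simp only [mul_zero, Real.exp_zero, mul_one] at h2
      have h3 : Real.exp (-μ * (t - 0)) * y 0 ≤ y 0 := by
        have := hy 0 le_rfl
        nlinarith [Real.exp_le_one_iff.2 (by nlinarith : -μ * (t - 0) ≤ 0)]
      have h4 : C * sSup (η '' Set.Ioo 0 t) ≤ C * C' :=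
        mul_le_mul_of_nonneg_left h2 hC
      nlinarith
  -- choose θ
  set θ : ℝ := max (ν' / γ) (1/2) with hθdef
  have hθ0 : 0 < θ := lt_of_lt_of_le (by norm_num) (le_max_right _ _)
  have hθ1 : θ < 1 := by
    apply max_lt _ (by norm_num)
    rw [div_lt_one hγ]; exact hν'γ
  have hγθ : ν' ≤ γ * θ := by
    have : ν' / γ ≤ θ := le_max_left _ _
    calc ν' = γ * (ν' / γ) := by field_simp
    _ ≤ γ * θ := mul_le_mul_of_nonneg_left this hγ.le
  -- main induction
  have key : ∀ n : ℕ, ∀ t, 0 ≤ t →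
      y t ≤ (B + n * (C * C')) * Real.exp (-(min (μ * (1 - θ ^ n)) ν') * t) := by
    intro n
    induction n with
    | zero =>
      intro t ht
      have hmin : min (μ * (1 - θ ^ 0)) ν' ≤ 0 :=
        le_trans (min_le_left _ _) (by norm_num)
      have h1 : (1:ℝ) ≤ Real.exp (-(min (μ * (1 - θ ^ 0)) ν') * t) := by
        rw [Real.one_le_exp_iff]
        nlinarith
      have hb := hbound t ht
      push_cast
      nlinarith [mul_nonneg hBnn (sub_nonneg.2 h1)]
    | succ n ih =>
      intro t ht
      set lam : ℝ := min (μ * (1 - θ ^ n)) ν' with hlam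
      set lam' : ℝ := min (μ * (1 - θ ^ (n+1))) ν' with hlam'
      have hAnn : 0 ≤ B + n * (C * C') := by positivity
      -- lam' ≤ γ θ
      have hk1 : lam' ≤ γ * θ := le_trans (min_le_right _ _) hγθ
      -- lam' ≤ μ(1-θ) + θ lam
      have hk2 : lam' ≤ μ * (1 - θ) + θ * lam := by
        rcases le_total (μ * (1 - θ ^ n)) ν' with h | h
        · have : lam = μ * (1 - θ ^ n) := min_eq_left h
          rw [this]
          have : μ * (1 - θ) + θ * (μ * (1 - θ ^ n)) = μ * (1 - θ ^ (n+1)) := by ring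
          rw [this]
          exact min_le_left _ _
        · have : lam = ν' := min_eq_right h
          rw [this]
          have h1 : lam' ≤ ν' := min_le_right _ _
          nlinarith [mul_nonneg (sub_nonneg.2 hν'μ.le) (sub_nonneg.2 hθ1.le)]
      rcases eq_or_lt_of_le ht with h0 | h0
      · -- t = 0
        have := hbound 0 le_rfl
        rw [← h0]
        simp only [mul_zero, Real.exp_zero, mul_one]
        have hcc : 0 ≤ (n:ℝ) * (C * C') + C * C' := by positivity
        push_cast
        linarith
      · -- t > 0
        have hσ0 : 0 ≤ θ * t := by positivity
        have hσt : θ * t < t := by nlinarith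
        have h1 := hineq (θ * t) t hσ0 hσt
        have h2 := hsup (θ * t) t hσ0 hσt
        have h3 := ih (θ * t) hσ0
        have hE1 : Real.exp (-μ * (t - θ * t)) * y (θ * t)
            ≤ (B + n * (C * C')) * Real.exp (-(μ * (1 - θ) + θ * lam) * t) := by
          calc Real.exp (-μ * (t - θ * t)) * y (θ * t)
              ≤ Real.exp (-μ * (t - θ * t)) *
                ((B + n * (C * C')) * Real.exp (-lam * (θ * t))) :=
              mul_le_mul_of_nonneg_left h3 (Real.exp_pos _).le
          _ = (B + n * (C * C')) *
                (Real.exp (-μ * (t - θ * t)) * Real.exp (-lam * (θ * t))) := by ring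
          _ = (B + n * (C * C')) * Real.exp (-(μ * (1 - θ) + θ * lam) * t) := by
              rw [← Real.exp_add]; ring_nf
        have hE2 : C * sSup (η '' Set.Ioo (θ * t) t)
            ≤ C * C' * Real.exp (-(γ * θ) * t) := by
          have := mul_le_mul_of_nonneg_left h2 hC
          calc C * sSup (η '' Set.Ioo (θ * t) t) ≤ C * (C' * Real.exp (-γ * (θ * t))) := this
          _ = C * C' * Real.exp (-(γ * θ) * t) := by ring_nf
        have hmono1 : Real.exp (-(μ * (1 - θ) + θ * lam) * t) ≤ Real.exp (-lam' * t) := by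
          apply Real.exp_le_exp.2
          nlinarith [mul_le_mul_of_nonneg_right hk2 ht]
        have hmono2 : Real.exp (-(γ * θ) * t) ≤ Real.exp (-lam' * t) := by
          apply Real.exp_le_exp.2
          nlinarith [mul_le_mul_of_nonneg_right hk1 ht]
        calc y t ≤ Real.exp (-μ * (t - θ * t)) * y (θ * t)
              + C * sSup (η '' Set.Ioo (θ * t) t) := h1
        _ ≤ (B + n * (C * C')) * Real.exp (-(μ * (1 - θ) + θ * lam) * t)
              + C * C' * Real.exp (-(γ * θ) * t) := add_le_add hE1 hE2
        _ ≤ (B + n * (C * C')) * Real.exp (-lam' * t)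
              + C * C' * Real.exp (-lam' * t) := by
            gcongr
        _ = (B + (n+1 : ℕ) * (C * C')) * Real.exp (-lam' * t) := by push_cast; ring
  -- pick n
  have hε : 0 < (μ - ν') / μ := div_pos (by linarith) hμ
  obtain ⟨n, hn⟩ := exists_pow_lt_of_lt_one hε hθ1
  refine ⟨B + n * (C * C'), fun t ht => ?_⟩
  have hmin : min (μ * (1 - θ ^ n)) ν' = ν' := by
    apply min_eq_right
    have := (lt_div_iff₀ hμ).mp hn
    nlinarith
  exact le_trans (key n t ht) (by rw [hmin])
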